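/- Let A be the 2-dimensional algebra over a field F of characteristic ≠ 2,3 with basis e1, e2 and multiplication e1·e1 = (1/2)e1, e1·e2 = (1/2)e2, e2·e1 = (1/2)e2, e2·e2 = e1. Then A satisfies the Jordan identity (u·v)·(u·u) = u·(v·(u·u)) for all u, v in A. -/

import Mathlib

/-- Multiplication on `F × F` of the 2-dimensional algebra with matrix of structure
constants `(a1 a2 a3 a4 // b1 b2 b3 b4)`: here `e1·e1 = a1·e1 + b1·e2`,
`e1·e2 = a2·e1 + b2·e2`, `e2·e1 = a3·e1 + b3·e2`, `e2·e2 = a4·e1 + b4·e2`. -/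
def mul2 {F : Type*} [Field F] (a1 a2 a3 a4 b1 b2 b3 b4 : F) (u v : F × F) : F × F :=
  (a1 * u.1 * v.1 + a2 * u.1 * v.2 + a3 * u.2 * v.1 + a4 * u.2 * v.2,
   b1 * u.1 * v.1 + b2 * u.1 * v.2 + b3 * u.2 * v.1 + b4 * u.2 * v.2)

set_option maxHeartbeats 2000000 in
theorem stmt0 (F : Type*) [Field F] (h2 : (2 : F) ≠ 0) (h3 : (3 : F) ≠ 0) :
    ∀ u v : F × F, mul2 ((1:F)/2) (0) (0) (1) (0) ((1:F)/2) ((1:F)/2) (0) (mul2 ((1:F)/2) (0) (0) (1) (0) ((1:F)/2) ((1:F)/2) (0) u v) (mul2 ((1:F)/2) (0) (0) (1) (0) ((1:F)/2) ((1:F)/2) (0) u u) = mul2 ((1:F)/2) (0) (0) (1) (0) ((1:F)/2) ((1:F)/2) (0) u (mul2 ((1:F)/2) (0) (0) (1) (0) ((1:F)/2) ((1:F)/2) (0) v (mul2 ((1:F)/2) (0) (0) (1) (0) ((1:F)/2) ((1:F)/2) (0) u u)) := by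
  intro u v
  have h64 : (64:F) ≠ 0 := by
    have : (64:F) = 2^6 := by norm_num
    rw [this]; exact pow_ne_zero _ h2
  have h128 : (128:F) ≠ 0 := by
    have : (128:F) = 2^7 := by norm_num
    rw [this]; exact pow_ne_zero _ h2
  simp only [mul2, Prod.mk.injEq]
  constructor
  · field_simp
    ring
  · field_simp
    ring
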